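/- For every integer p ≥ 1 and all real (v,u): ∂²θ_{2,p}/∂u² = e^u·∂θ_{2,p−1}/∂v, ∂²θ_{2,p}/∂u∂v = ∂θ_{2,p−1}/∂u, and ∂²θ_{2,p}/∂v² = ∂θ_{2,p−1}/∂v, i.e. the functions θ_{2,p} satisfy the deformed flatness recursion ∂²θ_{2,p}/∂w^β∂w^γ = c^ξ_{βγ}·∂θ_{2,p−1}/∂w^ξ determined by the Frobenius potential F = (1/2)v²u + e^u. -/

import Mathlib

/-!
The dispersionless Hamiltonian densities `θ_{α,p}(v,u)` of the extended Toda
hierarchy and their partial derivatives.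
-/

noncomputable section Toda

/-- The harmonic number `H_m = Σ_{j=1}^m 1/j`. -/
def harm (m : ℕ) : ℝ := ∑ j ∈ Finset.Icc 1 m, (1 : ℝ) / (j : ℝ)

/-- `θ_{2,p}(v,u) = Σ_{2m ≤ p+1} e^{mu} v^{p+1−2m} / ((m!)² (p+1−2m)!)`. -/
def theta2 (p : ℕ) (v u : ℝ) : ℝ :=
  ∑ m ∈ Finset.range ((p + 1) / 2 + 1),
    Real.exp (m * u) * v ^ (p + 1 - 2 * m) /
      ((Nat.factorial m : ℝ) ^ 2 * (Nat.factorial (p + 1 - 2 * m) : ℝ))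

/-- `θ_{1,p}(v,u) = −2 Σ_{2m ≤ p} (H_m − u/2) e^{mu} v^{p−2m} / ((m!)² (p−2m)!)`. -/
def theta1 (p : ℕ) (v u : ℝ) : ℝ :=
  -2 * ∑ m ∈ Finset.range (p / 2 + 1),
    (harm m - u / 2) * Real.exp (m * u) * v ^ (p - 2 * m) /
      ((Nat.factorial m : ℝ) ^ 2 * (Nat.factorial (p - 2 * m) : ℝ))

/-- Partial derivative in the first variable `v`. -/
def dv (f : ℝ → ℝ → ℝ) (v u : ℝ) : ℝ := deriv (fun v' => f v' u) v

/-- Partial derivative in the second variable `u`. -/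
def du (f : ℝ → ℝ → ℝ) (v u : ℝ) : ℝ := deriv (fun u' => f v u') u

/-- Summation helper: a longer sum equals a shorter one when the extra
terms vanish and the common terms agree. -/
lemma sum_ext_zero {N1 N2 : ℕ} (hN : N1 ≤ N2) {g h : ℕ → ℝ}
    (heq : ∀ m, m < N1 → g m = h m) (hz : ∀ m, N1 ≤ m → m < N2 → g m = 0) :
    ∑ m ∈ Finset.range N2, g m = ∑ m ∈ Finset.range N1, h m := by
  rw [← Finset.sum_range_add_sum_Ico g hN]
  have h1 : ∑ m ∈ Finset.range N1, g m = ∑ m ∈ Finset.range N1, h m :=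
    Finset.sum_congr rfl fun m hm => heq m (Finset.mem_range.mp hm)
  have h2 : ∑ m ∈ Finset.Ico N1 N2, g m = 0 :=
    Finset.sum_eq_zero fun m hm => by
      obtain ⟨h3, h4⟩ := Finset.mem_Ico.mp hm
      exact hz m h3 h4
  rw [h1, h2, add_zero]

/-- The `v`-derivative of `θ_{2,p}` as an explicit sum. -/
lemma dv_theta2_sum (p : ℕ) (v u : ℝ) :
    dv (theta2 p) v u = ∑ m ∈ Finset.range ((p + 1) / 2 + 1),
      Real.exp (m * u) * (((p + 1 - 2 * m : ℕ) : ℝ) * v ^ (p - 2 * m)) /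
        ((Nat.factorial m : ℝ) ^ 2 * (Nat.factorial (p + 1 - 2 * m) : ℝ)) := by
  unfold dv theta2
  rw [deriv_fun_sum (fun i _ => by fun_prop)]
  refine Finset.sum_congr rfl fun m _ => ?_
  rw [deriv_div_const, deriv_const_mul _ (by fun_prop), deriv_pow_field]
  have : p + 1 - 2 * m - 1 = p - 2 * m := by omega
  rw [this]

/-- The `u`-derivative of `θ_{2,p}` as an explicit sum. -/
lemma du_theta2_sum (p : ℕ) (v u : ℝ) :
    du (theta2 p) v u = ∑ m ∈ Finset.range ((p + 1) / 2 + 1),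
      (m : ℝ) * Real.exp (m * u) * v ^ (p + 1 - 2 * m) /
        ((Nat.factorial m : ℝ) ^ 2 * (Nat.factorial (p + 1 - 2 * m) : ℝ)) := by
  unfold du theta2
  rw [deriv_fun_sum (fun i _ => by fun_prop)]
  refine Finset.sum_congr rfl fun m _ => ?_
  have hd : DifferentiableAt ℝ (fun u' => Real.exp ((m : ℝ) * u')) u := by fun_prop
  have hm : deriv (HMul.hMul (m:ℝ)) u = m := by
    have h : (HMul.hMul (m:ℝ)) = fun x : ℝ => (m:ℝ) * x := rfl
    rw [h, deriv_const_mul _ differentiableAt_fun_id, deriv_id'']; ring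
  rw [deriv_div_const, deriv_mul_const hd, deriv_exp (by fun_prop)]
  rw [hm]; ring

/-- `∂θ_{2,p+1}/∂v = θ_{2,p}`. -/
lemma dv_theta2 (q : ℕ) (v u : ℝ) : dv (theta2 (q + 1)) v u = theta2 q v u := by
  rw [dv_theta2_sum]
  unfold theta2
  refine sum_ext_zero (by omega) (fun m hm => ?_) (fun m hm1 hm2 => ?_)
  · have h2m : 2 * m ≤ q + 1 := by omega
    have h1 : q + 1 + 1 - 2 * m = (q + 1 - 2 * m) + 1 := by omega
    obtain ⟨n, hn⟩ : ∃ n, q + 1 - 2 * m = n := ⟨_, rfl⟩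
    have h1' : q + 1 + 1 - 2 * m = n + 1 := by omega
    rw [h1', hn, Nat.factorial_succ]
    have hfm : ((Nat.factorial m : ℝ)) ≠ 0 := Nat.cast_ne_zero.mpr (Nat.factorial_ne_zero m)
    have hfn : ((Nat.factorial n : ℝ)) ≠ 0 := Nat.cast_ne_zero.mpr (Nat.factorial_ne_zero n)
    push_cast
    field_simp
  · have h0 : q + 1 + 1 - 2 * m = 0 := by omega
    rw [h0]
    simp

/-- `∂²θ_{2,q+1}/∂u² = e^u ∂θ_{2,q}/∂v`. -/
lemma dudu_theta2 (q : ℕ) (v u : ℝ) :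
    du (du (theta2 (q + 1))) v u = Real.exp u * dv (theta2 q) v u := by
  have hfun : (fun u' => du (theta2 (q + 1)) v u') =
      fun u' => ∑ m ∈ Finset.range ((q + 1 + 1) / 2 + 1),
        (m : ℝ) * Real.exp (m * u') * v ^ (q + 1 + 1 - 2 * m) /
          ((Nat.factorial m : ℝ) ^ 2 * (Nat.factorial (q + 1 + 1 - 2 * m) : ℝ)) := by
    funext u'; exact du_theta2_sum (q + 1) v u'
  show deriv (fun u' => du (theta2 (q + 1)) v u') u = _
  rw [hfun, deriv_fun_sum (fun i _ => by fun_prop)]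
  have hterm : ∀ m : ℕ, deriv (fun u' => (m : ℝ) * Real.exp (m * u') * v ^ (q + 1 + 1 - 2 * m) /
      ((Nat.factorial m : ℝ) ^ 2 * (Nat.factorial (q + 1 + 1 - 2 * m) : ℝ))) u =
      (m : ℝ) * ((m : ℝ) * Real.exp (m * u)) * v ^ (q + 1 + 1 - 2 * m) /
      ((Nat.factorial m : ℝ) ^ 2 * (Nat.factorial (q + 1 + 1 - 2 * m) : ℝ)) := by
    intro m
    have hd : DifferentiableAt ℝ (fun u' => (m : ℝ) * Real.exp ((m : ℝ) * u')) u := by fun_prop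
    have hm : deriv (HMul.hMul (m:ℝ)) u = m := by
      have h : (HMul.hMul (m:ℝ)) = fun x : ℝ => (m:ℝ) * x := rfl
      rw [h, deriv_const_mul _ differentiableAt_fun_id, deriv_id'']; ring
    rw [deriv_div_const, deriv_mul_const hd, deriv_const_mul _ (by fun_prop),
      deriv_exp (by fun_prop), hm]
    ring
  rw [Finset.sum_congr rfl fun m _ => hterm m]
  rw [dv_theta2_sum q v u, Finset.mul_sum]
  rw [Finset.sum_range_succ']
  have h0 : ((0:ℕ) : ℝ) * (((0:ℕ):ℝ) * Real.exp ((0:ℕ) * u)) * v ^ (q + 1 + 1 - 2 * 0) /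
      ((Nat.factorial 0 : ℝ) ^ 2 * (Nat.factorial (q + 1 + 1 - 2 * 0) : ℝ)) = 0 := by
    norm_num
  rw [h0, add_zero]
  refine (sum_ext_zero (by omega) (fun m hm => ?_) (fun m hm1 hm2 => ?_)).symm
  · -- m < (q+2)/2, so 2m ≤ q
    have h2m : 2 * m ≤ q := by omega
    obtain ⟨n, hn⟩ : ∃ n, q - 2 * m = n := ⟨_, rfl⟩
    have e1 : q + 1 - 2 * m = n + 1 := by omega
    have e2 : q + 1 + 1 - 2 * (m + 1) = n := by omega
    rw [e1, hn, e2, Nat.factorial_succ, Nat.factorial_succ]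
    have he : Real.exp (((m:ℕ) + 1 : ℕ) * u) = Real.exp u * Real.exp ((m:ℝ) * u) := by
      rw [← Real.exp_add]; push_cast; ring_nf
    have hfm : ((Nat.factorial m : ℝ)) ≠ 0 := Nat.cast_ne_zero.mpr (Nat.factorial_ne_zero m)
    have hfn : ((Nat.factorial n : ℝ)) ≠ 0 := Nat.cast_ne_zero.mpr (Nat.factorial_ne_zero n)
    rw [he]
    push_cast
    field_simp
  · -- 2m = q+1, so coefficient q+1-2m = 0
    have h0' : q + 1 - 2 * m = 0 := by omega
    rw [h0']
    simp

theorem theta2_deformed_flatness (p : ℕ) (hp : 1 ≤ p) (v u : ℝ) :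
    du (du (theta2 p)) v u = Real.exp u * dv (theta2 (p - 1)) v u ∧
    du (dv (theta2 p)) v u = du (theta2 (p - 1)) v u ∧
    dv (dv (theta2 p)) v u = dv (theta2 (p - 1)) v u := by
  obtain ⟨q, rfl⟩ : ∃ q, p = q + 1 := ⟨p - 1, by omega⟩
  have hsub : q + 1 - 1 = q := rfl
  have hfun : dv (theta2 (q + 1)) = theta2 q := by
    funext a b; exact dv_theta2 q a b
  refine ⟨?_, ?_, ?_⟩
  · rw [hsub]; exact dudu_theta2 q v u
  · rw [hsub, hfun]
  · rw [hsub, hfun]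

end Toda
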